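/- Let n ≥ 2 and integers b₁ ≥ 2 = b₂ ≥ b₃ ≥ ⋯ ≥ b_{n−1} ≥ 0. Then the map (a₂,…,a_n) ↦ Σ_{i=2}^{n} a_i·(a_i + 2(n−i)) is injective on T = {(a₂,…,a_n) ∈ ℤ^{n−1} : b₁ ≥ a₂ ≥ b₂ ≥ a₃ ≥ b₃ ≥ ⋯ ≥ b_{n−1} ≥ a_n ≥ 0}. -/

import Mathlib

private lemma telescope_aux (c : ℕ → ℤ) (n : ℕ) (hn : 2 ≤ n) :
    ∑ i ∈ Finset.Icc 3 n, (c (i - 1) - c i) = c 2 - c n := by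
  induction n, hn using Nat.le_induction with
  | base => rw [Finset.Icc_eq_empty (by omega)]; simp
  | succ m hm ih =>
    rw [Finset.sum_Icc_succ_top (by omega), ih]
    have h1 : m + 1 - 1 = m := rfl
    rw [h1]; ring

private lemma chain_aux (n : ℕ) (b : ℕ → ℤ)
    (hb : ∀ i, 1 ≤ i → i ≤ n - 2 → b (i + 1) ≤ b i) :
    ∀ p q, 1 ≤ p → p ≤ q → q ≤ n - 1 → b q ≤ b p := by
  intro p q hp
  induction q with
  | zero => intro hpq _; exact absurd (hp.trans hpq) (by omega)
  | succ m ih =>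
    intro hpq hq
    rcases Nat.eq_or_lt_of_le hpq with h | h
    · subst h; exact le_rfl
    · exact le_trans (hb m (by omega) (by omega)) (ih (by omega) (by omega))

private lemma one_case (N j x y u v : ℤ) (hN : 3 ≤ N) (hj : 3 ≤ j) (hjn : j ≤ N)
    (hx : 2 ≤ x) (hy : 2 ≤ y)
    (hu0 : 0 ≤ u) (hu2 : u ≤ 2) (hv0 : 0 ≤ v) (hv2 : v ≤ 2) (huv : u ≠ v)
    (heq : (x - y) * (x + y + 2 * (N - 2)) + (u - v) * (u + v + 2 * (N - j)) = 0) :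
    False := by
  have hd4 : u - v = 1 ∨ u - v = -1 ∨ u - v = 2 ∨ u - v = -2 := by omega
  have hxy : x - y = 0 ∨ x - y = 1 ∨ x - y = -1 ∨ 2 ≤ x - y ∨ x - y ≤ -2 := by omega
  rcases hxy with h | h | h | h | h
  · rcases hd4 with hd | hd | hd | hd <;> rw [h, hd] at heq <;> omega
  · rcases hd4 with hd | hd | hd | hd <;> rw [h, hd] at heq <;> omega
  · rcases hd4 with hd | hd | hd | hd <;> rw [h, hd] at heq <;> omega
  · have hM : (0:ℤ) ≤ x + y + 2 * (N - 2) := by linarith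
    have h2M : 2 * (x + y + 2 * (N - 2)) ≤ (x - y) * (x + y + 2 * (N - 2)) :=
      mul_le_mul_of_nonneg_right (by linarith) hM
    rcases hd4 with hd | hd | hd | hd <;> rw [hd] at heq <;> nlinarith
  · have hM : (0:ℤ) ≤ x + y + 2 * (N - 2) := by linarith
    have h2M : (x - y) * (x + y + 2 * (N - 2)) ≤ (-2) * (x + y + 2 * (N - 2)) :=
      mul_le_mul_of_nonneg_right (by linarith) hM
    rcases hd4 with hd | hd | hd | hd <;> rw [hd] at heq <;> nlinarith

private lemma two_case (N j k x y u v w z B C : ℤ)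
    (hj : 3 ≤ j) (hjk : j + 1 ≤ k) (hkn : k ≤ N)
    (hx : 2 ≤ x) (hy : 2 ≤ y)
    (hBu : B ≤ u) (hBv : B ≤ v) (hu2 : u ≤ 2) (hv2 : v ≤ 2)
    (hw0 : 0 ≤ w) (hz0 : 0 ≤ z) (hwC : w ≤ C) (hzC : z ≤ C) (hCB : C ≤ B)
    (hdu : u - v = 1 ∨ u - v = -1) (hdw : w - z = 1 ∨ w - z = -1)
    (heq : (x - y) * (x + y + 2 * (N - 2)) + (u - v) * (u + v + 2 * (N - j))
        + (w - z) * (w + z + 2 * (N - k)) = 0) : False := by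
  have hm : w + z + 2 * (N - k) + 4 ≤ u + v + 2 * (N - j) := by omega
  have hmk : 1 ≤ w + z + 2 * (N - k) := by omega
  have hmj3 : u + v + 2 * (N - j) ≤ 2 * N - 3 := by omega
  have hxy : x - y = 0 ∨ x - y = 1 ∨ x - y = -1 ∨ 2 ≤ x - y ∨ x - y ≤ -2 := by omega
  rcases hxy with h | h | h | h | h
  · rcases hdu with hd | hd <;> rcases hdw with he | he <;> rw [h, hd, he] at heq <;> omega
  · rcases hdu with hd | hd <;> rcases hdw with he | he <;> rw [h, hd, he] at heq <;> omega
  · rcases hdu with hd | hd <;> rcases hdw with he | he <;> rw [h, hd, he] at heq <;> omega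
  · have hM : (0:ℤ) ≤ x + y + 2 * (N - 2) := by linarith
    have h2M : 2 * (x + y + 2 * (N - 2)) ≤ (x - y) * (x + y + 2 * (N - 2)) :=
      mul_le_mul_of_nonneg_right (by linarith) hM
    rcases hdu with hd | hd <;> rcases hdw with he | he <;> rw [hd, he] at heq <;> nlinarith
  · have hM : (0:ℤ) ≤ x + y + 2 * (N - 2) := by linarith
    have h2M : (x - y) * (x + y + 2 * (N - 2)) ≤ (-2) * (x + y + 2 * (N - 2)) :=
      mul_le_mul_of_nonneg_right (by linarith) hM
    rcases hdu with hd | hd <;> rcases hdw with he | he <;> rw [hd, he] at heq <;> nlinarith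

/-- Corollary 4.3(iii)-type condition: for `n ≥ 2` and integers
`b 1 ≥ 2 = b 2 ≥ b 3 ≥ ⋯ ≥ b (n-1) ≥ 0`, the quadratic form
`(a₂,…,aₙ) ↦ ∑_{i=2}^{n} aᵢ(aᵢ + 2(n-i))` is injective on the interlacing set
`T = {a ∈ ℤ^{n-1} : b₁ ≥ a₂ ≥ b₂ ≥ a₃ ≥ ⋯ ≥ b_{n-1} ≥ aₙ ≥ 0}`. -/
theorem so_form_injective_b2_eq_two (n : ℕ) (hn : 2 ≤ n) (b a a' : ℕ → ℤ)
    (hbmono : ∀ i, 1 ≤ i → i ≤ n - 2 → b (i + 1) ≤ b i)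
    (hbnn : 0 ≤ b (n - 1)) (hb2 : b 2 = 2)
    (ha1 : ∀ i, 2 ≤ i → i ≤ n - 1 → a i ≤ b (i - 1) ∧ b i ≤ a i)
    (ha2 : 0 ≤ a n ∧ a n ≤ b (n - 1))
    (ha1' : ∀ i, 2 ≤ i → i ≤ n - 1 → a' i ≤ b (i - 1) ∧ b i ≤ a' i)
    (ha2' : 0 ≤ a' n ∧ a' n ≤ b (n - 1))
    (hsum : ∑ i ∈ Finset.Icc 2 n, a i * (a i + 2 * ((n : ℤ) - (i : ℤ))) =
      ∑ i ∈ Finset.Icc 2 n, a' i * (a' i + 2 * ((n : ℤ) - (i : ℤ)))) :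
    ∀ i, 2 ≤ i → i ≤ n → a i = a' i := by
  by_cases hn2 : n = 2
  · subst hn2
    intro i hi2 hin
    have hi : i = 2 := by omega
    subst hi
    rw [Finset.Icc_self, Finset.sum_singleton, Finset.sum_singleton] at hsum
    have key : (a 2 - a' 2) * (a 2 + a' 2) = 0 := by linear_combination hsum
    rcases mul_eq_zero.mp key with h | h
    · linarith
    · have h1 := ha2.1
      have h2 := ha2'.1
      -- a 2, a' 2 ≥ 0 and sum zero forces both zero
      have : a 2 = 0 := by linarith
      have : a' 2 = 0 := by linarith
      linarith
  · have hn3 : 3 ≤ n := by omega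
    have hchain := chain_aux n b hbmono
    -- bounds on a 2
    have hA2 := ha1 2 le_rfl (by omega)
    have hA2' := ha1' 2 le_rfl (by omega)
    have ha2low : 2 ≤ a 2 := by rw [hb2] at hA2; exact hA2.2
    have ha2low' : 2 ≤ a' 2 := by rw [hb2] at hA2'; exact hA2'.2
    have hbn2 : b (n - 1) ≤ 2 := by
      have h := hchain 2 (n - 1) (by omega) (by omega) (by omega)
      rw [hb2] at h; exact h
    have hup : ∀ i, 3 ≤ i → i ≤ n → a i ≤ b (i - 1) ∧ a' i ≤ b (i - 1) := by
      intro i h3 hin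
      rcases Nat.lt_or_ge i n with hlt | hge
      · exact ⟨(ha1 i (by omega) (by omega)).1, (ha1' i (by omega) (by omega)).1⟩
      · have hieq : i = n := by omega
        subst hieq
        exact ⟨ha2.2, ha2'.2⟩
    have hbnd : ∀ i, 3 ≤ i → i ≤ n → (0 ≤ a i ∧ a i ≤ 2) ∧ (0 ≤ a' i ∧ a' i ≤ 2) := by
      intro i h3 hin
      have hupi := hup i h3 hin
      have hbi1 : b (i - 1) ≤ 2 := by
        have h := hchain 2 (i - 1) (by omega) (by omega) (by omega)
        rw [hb2] at h; exact h
      rcases Nat.lt_or_ge i n with hlt | hge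
      · have h1 := ha1 i (by omega) (by omega)
        have h1' := ha1' i (by omega) (by omega)
        have h2 := hchain i (n - 1) (by omega) (by omega) (by omega)
        exact ⟨⟨by linarith, by linarith⟩, ⟨by linarith, by linarith⟩⟩
      · have hieq : i = n := by omega
        subst hieq
        exact ⟨⟨ha2.1, by linarith [ha2.2]⟩, ⟨ha2'.1, by linarith [ha2'.2]⟩⟩
    -- the difference equation, split at i = 2
    have hins : Finset.Icc 2 n = insert 2 (Finset.Icc 3 n) := by
      ext x; simp only [Finset.mem_Icc, Finset.mem_insert]; omega
    have heq : (a 2 - a' 2) * (a 2 + a' 2 + 2 * ((n : ℤ) - 2))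
        + ∑ i ∈ Finset.Icc 3 n, (a i - a' i) * (a i + a' i + 2 * ((n : ℤ) - (i : ℤ))) = 0 := by
      have h := sub_eq_zero_of_eq hsum
      rw [← Finset.sum_sub_distrib] at h
      have h2 : ∑ i ∈ Finset.Icc 2 n,
          (a i - a' i) * (a i + a' i + 2 * ((n : ℤ) - (i : ℤ))) = 0 := by
        rw [← h]; exact Finset.sum_congr rfl fun i _ => by ring
      rw [hins, Finset.sum_insert (by simp)] at h2
      push_cast at h2
      linarith [h2]
    -- telescoping bound on total slack
    have hsum2 : ∑ i ∈ Finset.Icc 3 n, |a i - a' i| ≤ 2 := by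
      have key : ∀ i ∈ Finset.Icc 3 n, |a i - a' i| ≤
          (if i - 1 ≤ n - 1 then b (i - 1) else 0) - (if i ≤ n - 1 then b i else 0) := by
        intro i hi
        rw [Finset.mem_Icc] at hi
        rcases Nat.lt_or_ge i n with hlt | hge
        · rw [if_pos (by omega), if_pos (by omega)]
          have h1 := ha1 i (by omega) (by omega)
          have h1' := ha1' i (by omega) (by omega)
          exact abs_le.mpr ⟨by linarith [h1.1, h1.2, h1'.1, h1'.2],
            by linarith [h1.1, h1.2, h1'.1, h1'.2]⟩
        · have hieq : i = n := by omega
          subst hieq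
          rw [if_pos (by omega), if_neg (by omega)]
          exact abs_le.mpr ⟨by linarith [ha2.1, ha2.2, ha2'.1, ha2'.2],
            by linarith [ha2.1, ha2.2, ha2'.1, ha2'.2]⟩
      calc ∑ i ∈ Finset.Icc 3 n, |a i - a' i|
          ≤ ∑ i ∈ Finset.Icc 3 n,
            ((if i - 1 ≤ n - 1 then b (i - 1) else 0) - (if i ≤ n - 1 then b i else 0)) :=
            Finset.sum_le_sum key
        _ = (if 2 ≤ n - 1 then b 2 else 0) - (if n ≤ n - 1 then b n else 0) :=
            telescope_aux (fun i => if i ≤ n - 1 then b i else 0) n (by omega)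
        _ = 2 := by rw [if_pos (by omega), if_neg (by omega), hb2]; ring
    by_cases hall : ∀ i ∈ Finset.Icc 3 n, a i = a' i
    · -- no tail difference
      have hT0 : ∑ i ∈ Finset.Icc 3 n,
          (a i - a' i) * (a i + a' i + 2 * ((n : ℤ) - (i : ℤ))) = 0 :=
        Finset.sum_eq_zero fun i hi => by rw [hall i hi]; ring
      rw [hT0, add_zero] at heq
      have h2eq : a 2 = a' 2 := by
        rcases mul_eq_zero.mp heq with h | h
        · linarith
        · exfalso
          have hn' : (3:ℤ) ≤ (n:ℤ) := by exact_mod_cast hn3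
          linarith
      intro i h2 hni
      rcases Nat.eq_or_lt_of_le h2 with h | h
      · exact h ▸ h2eq
      · exact hall i (Finset.mem_Icc.mpr ⟨h, hni⟩)
    · exfalso
      push_neg at hall
      obtain ⟨j, hjmem, hdj⟩ := hall
      have hj3 : 3 ≤ j := (Finset.mem_Icc.mp hjmem).1
      have hjn : j ≤ n := (Finset.mem_Icc.mp hjmem).2
      by_cases hone : ∀ i ∈ Finset.Icc 3 n, i ≠ j → a i = a' i
      · -- exactly one tail coordinate differs
        have hT : ∑ i ∈ Finset.Icc 3 n,
            (a i - a' i) * (a i + a' i + 2 * ((n : ℤ) - (i : ℤ)))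
            = (a j - a' j) * (a j + a' j + 2 * ((n : ℤ) - (j : ℤ))) :=
          Finset.sum_eq_single_of_mem j hjmem fun i hi hne => by rw [hone i hi hne]; ring
        rw [hT] at heq
        obtain ⟨⟨hu0, hu2⟩, ⟨hv0, hv2⟩⟩ := hbnd j hj3 hjn
        exact one_case (n:ℤ) (j:ℤ) (a 2) (a' 2) (a j) (a' j)
          (by exact_mod_cast hn3) (by exact_mod_cast hj3) (by exact_mod_cast hjn)
          ha2low ha2low' hu0 hu2 hv0 hv2 hdj (by linear_combination heq)
      · -- two tail coordinates differ
        push_neg at hone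
        obtain ⟨k, hkmem, hkj, hdk⟩ := hone
        have hk3 : 3 ≤ k := (Finset.mem_Icc.mp hkmem).1
        have hkn : k ≤ n := (Finset.mem_Icc.mp hkmem).2
        have hdj1 : 1 ≤ |a j - a' j| := abs_pos.mpr (sub_ne_zero_of_ne hdj)
        have hdk1 : 1 ≤ |a k - a' k| := abs_pos.mpr (sub_ne_zero_of_ne hdk)
        have hpair_sub : ({j, k} : Finset ℕ) ⊆ Finset.Icc 3 n := by
          intro x hx
          simp only [Finset.mem_insert, Finset.mem_singleton] at hx
          rcases hx with h | h <;> subst h <;> assumption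
        have hpair : |a j - a' j| + |a k - a' k| ≤ 2 := by
          have h := Finset.sum_le_sum_of_subset_of_nonneg
            (f := fun i => |a i - a' i|) hpair_sub (fun i _ _ => abs_nonneg _)
          rw [Finset.sum_pair (Ne.symm hkj)] at h
          linarith [hsum2]
        have habsj := abs_le.mp (by linarith : |a j - a' j| ≤ 1)
        have habsk := abs_le.mp (by linarith : |a k - a' k| ≤ 1)
        have hdju : a j - a' j = 1 ∨ a j - a' j = -1 := by
          have := sub_ne_zero_of_ne hdj; omega
        have hdku : a k - a' k = 1 ∨ a k - a' k = -1 := by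
          have := sub_ne_zero_of_ne hdk; omega
        have hrest : ∀ i ∈ Finset.Icc 3 n, i ≠ j → i ≠ k → a i = a' i := by
          intro i hi hij hik
          by_contra hne2
          have h1 : 1 ≤ |a i - a' i| := abs_pos.mpr (sub_ne_zero_of_ne hne2)
          have hsub3 : (insert i {j, k} : Finset ℕ) ⊆ Finset.Icc 3 n := by
            intro x hx
            simp only [Finset.mem_insert, Finset.mem_singleton] at hx
            rcases hx with h | h | h <;> subst h <;> assumption
          have h := Finset.sum_le_sum_of_subset_of_nonneg
            (f := fun i => |a i - a' i|) hsub3 (fun i _ _ => abs_nonneg _)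
          rw [Finset.sum_insert (by simp [hij, hik]), Finset.sum_pair (Ne.symm hkj)] at h
          linarith [hsum2]
        have hz : ∀ x ∈ Finset.Icc 3 n, x ∉ ({j, k} : Finset ℕ) →
            (a x - a' x) * (a x + a' x + 2 * ((n : ℤ) - (x : ℤ))) = 0 := by
          intro x hx hnx
          simp only [Finset.mem_insert, Finset.mem_singleton, not_or] at hnx
          rw [hrest x hx hnx.1 hnx.2]; ring
        have hT := (Finset.sum_subset hpair_sub hz).symm
        rw [Finset.sum_pair (Ne.symm hkj)] at hT
        rw [hT] at heq
        have hfinal : ∀ p q : ℕ, 3 ≤ p → p < q → q ≤ n →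
            (a p - a' p = 1 ∨ a p - a' p = -1) → (a q - a' q = 1 ∨ a q - a' q = -1) →
            ((a 2 - a' 2) * (a 2 + a' 2 + 2 * ((n : ℤ) - 2))
              + (a p - a' p) * (a p + a' p + 2 * ((n : ℤ) - (p : ℤ)))
              + (a q - a' q) * (a q + a' q + 2 * ((n : ℤ) - (q : ℤ))) = 0) → False := by
          intro p q hp hpq hqn hdp hdq heqpq
          have h1 := ha1 p (by omega) (by omega)
          have h1' := ha1' p (by omega) (by omega)
          obtain ⟨⟨_, hp2⟩, ⟨_, hp2'⟩⟩ := hbnd p hp (by omega)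
          obtain ⟨⟨hq0, _⟩, ⟨hq0', _⟩⟩ := hbnd q (by omega) hqn
          have hqu := hup q (by omega) hqn
          have hCB := hchain p (q - 1) (by omega) (by omega) (by omega)
          exact two_case (n:ℤ) (p:ℤ) (q:ℤ) (a 2) (a' 2) (a p) (a' p) (a q) (a' q)
            (b p) (b (q - 1))
            (by exact_mod_cast hp) (by exact_mod_cast hpq) (by exact_mod_cast hqn)
            ha2low ha2low' h1.2 h1'.2 hp2 hp2' hq0 hq0' hqu.1 hqu.2 hCB hdp hdq heqpq
        rcases lt_or_gt_of_ne (Ne.symm hkj) with hlt | hgt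
        · exact hfinal j k hj3 hlt hkn hdju hdku (by linear_combination heq)
        · exact hfinal k j hk3 hgt hjn hdku hdju (by linear_combination heq)
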